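/- For any polynomial q of degree d with sup-norm at most 1 on [-1,1], |q'(x)| ≤ d / √(1 - x²) for all x in the open interval (-1,1). -/

import Mathlib

open Polynomial Finset
open scoped Real
set_option maxHeartbeats 1000000

private lemma div_two_I (w : ℂ) : w/(2*Complex.I) = -(w*Complex.I)/2 := by
  field_simp [Complex.I_ne_zero]
  linear_combination w * Complex.I_sq

private lemma bernstein_Feval (q : Polynomial ℝ) (n : ℕ) (hn : q.natDegree ≤ n) (c β θ : ℝ) :
    Polynomial.eval (Complex.exp (θ*Complex.I))
      (Polynomial.C ((c:ℂ) * Complex.exp (-(β:ℂ)*Complex.I) / (2*Complex.I)) * Polynomial.X^(2*n)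
        - Polynomial.C ((c:ℂ) * Complex.exp ((β:ℂ)*Complex.I) / (2*Complex.I))
        - ∑ k ∈ Finset.range (n+1), Polynomial.C ((q.coeff k : ℂ)/2^k) * (Polynomial.X^2+1)^k * Polynomial.X^(n-k)) =
    Complex.exp ((n:ℂ)*θ*Complex.I) * ((c * Real.sin (n*θ - β) - q.eval (Real.cos θ) : ℝ) : ℂ) := by
  set z : ℂ := Complex.exp (θ*Complex.I) with hzdef
  have hzne : z ≠ 0 := Complex.exp_ne_zero _
  have hzinv : Complex.exp (-(θ:ℂ)*Complex.I) = z⁻¹ := by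
    rw [hzdef, ← Complex.exp_neg, neg_mul]
  have hcos : ((Real.cos θ : ℝ) : ℂ) = (z + z⁻¹)/2 := by
    rw [Complex.ofReal_cos, Complex.cos, hzdef, ← hzinv]
  have hz1 : z^2 + 1 = z * (2 * ((Real.cos θ : ℝ) : ℂ)) := by
    rw [hcos]
    field_simp
  have hE : z^n = Complex.exp ((n:ℂ)*θ*Complex.I) := by
    rw [hzdef, ← Complex.exp_nat_mul]
    ring_nf
  set E : ℂ := Complex.exp ((n:ℂ)*θ*Complex.I) with hEdef
  have hEne : E ≠ 0 := Complex.exp_ne_zero _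
  have hE2 : z^(2*n) = E^2 := by
    rw [mul_comm 2 n, pow_mul, hE]
  set B : ℂ := Complex.exp ((β:ℂ)*Complex.I) with hBdef
  have hBne : B ≠ 0 := Complex.exp_ne_zero _
  have hBinv : Complex.exp (-(β:ℂ)*Complex.I) = B⁻¹ := by
    rw [hBdef, ← Complex.exp_neg, neg_mul]
  have hsin : ((Real.sin (n*θ - β) : ℝ) : ℂ) = (E⁻¹*B - E*B⁻¹)*Complex.I/2 := by
    rw [Complex.ofReal_sin, Complex.sin]
    have h1 : (((n*θ - β : ℝ)) : ℂ) * Complex.I = (n:ℂ)*θ*Complex.I - (β:ℂ)*Complex.I := by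
      push_cast; try ring
    have h2 : -(((n*θ - β : ℝ)) : ℂ) * Complex.I = -((n:ℂ)*θ*Complex.I) + (β:ℂ)*Complex.I := by
      push_cast; try ring
    rw [h1, h2, Complex.exp_add, Complex.exp_sub, Complex.exp_neg, ← hEdef, ← hBdef]
    field_simp
    try ring
  -- evaluate the polynomial
  rw [Polynomial.eval_sub, Polynomial.eval_sub, Polynomial.eval_mul, Polynomial.eval_C,
    Polynomial.eval_pow, Polynomial.eval_X, Polynomial.eval_C, Polynomial.eval_finset_sum]
  have hsum : ∑ k ∈ Finset.range (n+1),
      Polynomial.eval z (Polynomial.C ((q.coeff k : ℂ)/2^k) * (Polynomial.X^2+1)^k * Polynomial.X^(n-k))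
      = E * ((q.eval (Real.cos θ) : ℝ) : ℂ) := by
    have hev : q.eval (Real.cos θ) = ∑ k ∈ Finset.range (n+1), q.coeff k * (Real.cos θ)^k :=
      Polynomial.eval_eq_sum_range' (lt_of_le_of_lt hn (Nat.lt_succ_self n)) _
    rw [hev]
    push_cast
    rw [Finset.mul_sum, ← hE]
    refine Finset.sum_congr rfl (fun k hk => ?_)
    have hk' : k ≤ n := Nat.lt_succ_iff.mp (Finset.mem_range.mp hk)
    simp only [Polynomial.eval_mul, Polynomial.eval_pow, Polynomial.eval_C, Polynomial.eval_X,
      Polynomial.eval_add, Polynomial.eval_one]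
    rw [hz1, mul_pow, mul_pow]
    have hzz : z^k * z^(n-k) = z^n := by
      rw [← pow_add, Nat.add_sub_cancel' hk']
    have h2k : (2:ℂ)^k ≠ 0 := pow_ne_zero _ two_ne_zero
    field_simp
    rw [← hzz]
    push_cast
    ring
  rw [hsum, hE2, hBinv, div_two_I, div_two_I, Complex.ofReal_sub, Complex.ofReal_mul, hsin]
  field_simp
  ring

private lemma cos_nat_pi (j : ℕ) : Real.cos (j*π) = (-1)^j := by
  induction j with
  | zero => simp
  | succ k ih => push_cast; rw [add_mul, one_mul, Real.cos_add_pi, ih]; ring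

private lemma exists_pos_left {R : ℝ → ℝ} {θ0 L a : ℝ} (hR : HasDerivAt R L θ0) (hL : L < 0)
    (h0 : R θ0 = 0) (ha : a < θ0) : ∃ s, s ∈ Set.Ioo a θ0 ∧ 0 < R s := by
  have hs := hasDerivAt_iff_tendsto_slope.mp hR
  have hlt : ∀ᶠ s in nhdsWithin θ0 {θ0}ᶜ, slope R θ0 s < 0 := hs.eventually_lt_const hL
  have h2 : nhdsWithin θ0 (Set.Iio θ0) ≤ nhdsWithin θ0 {θ0}ᶜ :=
    nhdsWithin_mono _ (fun s hs => ne_of_lt hs)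
  have h3 : ∀ᶠ s in nhdsWithin θ0 (Set.Iio θ0), slope R θ0 s < 0 := hlt.filter_mono h2
  have h4 : ∀ᶠ s in nhdsWithin θ0 (Set.Iio θ0), a < s ∧ s < θ0 := by
    filter_upwards [Ioo_mem_nhdsLT_of_mem (Set.mem_Ioc.mpr ⟨ha, le_refl _⟩)] with s hs
    exact ⟨hs.1, hs.2⟩
  obtain ⟨s, hs1, hs2, hs3⟩ := (h3.and h4).exists
  refine ⟨s, ⟨hs2, hs3⟩, ?_⟩
  have hslope : slope R θ0 s = R s / (s - θ0) := by
    rw [slope_def_field, h0]; ring_nf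
  rw [hslope] at hs1
  rcases div_neg_iff.mp hs1 with ⟨h5, h6⟩ | ⟨h5, h6⟩
  · exact h5
  · linarith
private lemma exists_neg_right {R : ℝ → ℝ} {θ0 L b : ℝ} (hR : HasDerivAt R L θ0) (hL : L < 0)
    (h0 : R θ0 = 0) (hb : θ0 < b) : ∃ s, s ∈ Set.Ioo θ0 b ∧ R s < 0 := by
  have hs := hasDerivAt_iff_tendsto_slope.mp hR
  have hlt : ∀ᶠ s in nhdsWithin θ0 {θ0}ᶜ, slope R θ0 s < 0 := hs.eventually_lt_const hL
  have h2 : nhdsWithin θ0 (Set.Ioi θ0) ≤ nhdsWithin θ0 {θ0}ᶜ :=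
    nhdsWithin_mono _ (fun s hs => (ne_of_gt hs))
  have h3 : ∀ᶠ s in nhdsWithin θ0 (Set.Ioi θ0), slope R θ0 s < 0 := hlt.filter_mono h2
  have h4 : ∀ᶠ s in nhdsWithin θ0 (Set.Ioi θ0), θ0 < s ∧ s < b := by
    filter_upwards [Ioo_mem_nhdsGT_of_mem (Set.mem_Ico.mpr ⟨le_refl _, hb⟩)] with s hs
    exact ⟨hs.1, hs.2⟩
  obtain ⟨s, hs1, hs2, hs3⟩ := (h3.and h4).exists
  refine ⟨s, ⟨hs2, hs3⟩, ?_⟩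
  have hslope : slope R θ0 s = R s / (s - θ0) := by
    rw [slope_def_field, h0]; ring_nf
  rw [hslope] at hs1
  rcases div_neg_iff.mp hs1 with ⟨h5, h6⟩ | ⟨h5, h6⟩
  · linarith
  · exact h5

private lemma bernstein_key (q : Polynomial ℝ) (n : ℕ) (hn : q.natDegree ≤ n) (hn1 : 1 ≤ n)
    (hq : ∀ x ∈ Set.Icc (-1:ℝ) 1, |q.eval x| ≤ 1) (θ0 : ℝ) :
    -Real.sin θ0 * (Polynomial.derivative q).eval (Real.cos θ0) ≤ n := by
  by_contra hcon
  push_neg at hcon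
  set D : ℝ := -Real.sin θ0 * (Polynomial.derivative q).eval (Real.cos θ0) with hD
  have hnR : (1:ℝ) ≤ (n:ℝ) := by exact_mod_cast hn1
  have hn0 : (0:ℝ) < n := lt_of_lt_of_le one_pos hnR
  have hnD : (n:ℝ) < D := hcon
  have hg : ∀ θ:ℝ, |q.eval (Real.cos θ)| ≤ 1 := fun θ =>
    hq _ ⟨Real.neg_one_le_cos θ, Real.cos_le_one θ⟩
  set c : ℝ := ((n:ℝ) + D)/(2*n) with hc
  have hcn : (n:ℝ) * c = ((n:ℝ) + D)/2 := by rw [hc]; field_simp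
  have hc1 : 1 < c := by rw [hc, lt_div_iff₀ (by positivity)]; nlinarith
  have hcnD : (n:ℝ) * c < D := by rw [hcn]; linarith
  have hc0 : 0 < c := lt_trans one_pos hc1
  have hgc1 : -1 < q.eval (Real.cos θ0)/c := by
    have h := hg θ0; rw [abs_le] at h
    rw [lt_div_iff₀ hc0]; nlinarith [h.1]
  have hgc2 : q.eval (Real.cos θ0)/c < 1 := by
    have h := hg θ0; rw [abs_le] at h
    rw [div_lt_iff₀ hc0]; nlinarith [h.2]
  set β' : ℝ := Real.arcsin (q.eval (Real.cos θ0)/c) with hβ'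
  have hβ'1 : -(π/2) < β' := Real.neg_pi_div_two_lt_arcsin.mpr hgc1
  have hβ'2 : β' < π/2 := Real.arcsin_lt_pi_div_two.mpr hgc2
  have hsinβ' : Real.sin β' = q.eval (Real.cos θ0)/c :=
    Real.sin_arcsin (le_of_lt hgc1) (le_of_lt hgc2)
  have hcosβ' : Real.cos β' ≤ 1 := Real.cos_le_one _
  set β : ℝ := n*θ0 - β' with hβ
  set R : ℝ → ℝ := fun θ => c * Real.sin (n*θ - β) - q.eval (Real.cos θ) with hR
  have hRcont : Continuous R := by
    rw [hR]; fun_prop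
  have hβ'eq : (n:ℝ)*θ0 - β = β' := by rw [hβ]; ring
  have hRθ0 : R θ0 = 0 := by
    rw [hR]; dsimp only; rw [hβ'eq, hsinβ']; field_simp; ring
  have hgder : HasDerivAt (fun θ => q.eval (Real.cos θ)) D θ0 := by
    have h1 := q.hasDerivAt (Real.cos θ0)
    have h2 := Real.hasDerivAt_cos θ0
    have h3 := h1.comp θ0 h2
    rw [hD, mul_comm]; exact h3
  have hRder : HasDerivAt R (c * (Real.cos ((n:ℝ)*θ0 - β) * n) - D) θ0 := by
    have h3 : HasDerivAt (fun θ:ℝ => (n:ℝ)*θ - β) n θ0 := by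
      simpa using ((hasDerivAt_id θ0).const_mul (n:ℝ)).sub_const β
    have h4 := (Real.hasDerivAt_sin ((n:ℝ)*θ0 - β)).comp θ0 h3
    exact (h4.const_mul c).sub hgder
  have hRder0 : c * (Real.cos ((n:ℝ)*θ0 - β) * n) - D < 0 := by
    rw [hβ'eq]
    have : c * (Real.cos β' * n) ≤ c * n := by
      have := Real.neg_one_le_cos β'
      nlinarith
    nlinarith
  -- the grid points
  set t : ℕ → ℝ := fun j => (β - π/2 + j*π)/n with ht
  have htmono : StrictMono t := by
    intro i j hij
    rw [ht]
    have hij' : (i:ℝ) < j := by exact_mod_cast hij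
    dsimp only
    rw [div_lt_div_iff₀ hn0 hn0]
    have hπ := Real.pi_pos
    nlinarith [mul_pos (mul_pos (sub_pos.mpr hij') hπ) hn0]
  have htR : ∀ j:ℕ, R (t j) = c * (-1)^(j+1) - q.eval (Real.cos (t j)) := by
    intro j
    have harg : (n:ℝ) * t j - β = j*π - π/2 := by
      rw [ht]; dsimp only; field_simp; ring
    rw [hR]; dsimp only
    rw [harg, Real.sin_sub, Real.sin_pi_div_two, Real.cos_pi_div_two, cos_nat_pi,
      Real.sin_nat_mul_pi]
    ring_nf
  have htRpos : ∀ j:ℕ, Odd j → 0 < R (t j) := by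
    intro j hj
    rw [htR j, Odd.add_one hj |>.neg_one_pow]
    have := hg (t j); rw [abs_le] at this
    nlinarith [this.1]
  have htRneg : ∀ j:ℕ, Even j → R (t j) < 0 := by
    intro j hj
    have hodd : Odd (j+1) := Even.add_one hj
    rw [htR j, hodd.neg_one_pow]
    have := hg (t j); rw [abs_le] at this
    nlinarith [this.2]
  have hz : ∀ j:ℕ, ∃ z, z ∈ Set.Ioo (t j) (t (j+1)) ∧ R z = 0 := by
    intro j
    have hlt : t j ≤ t (j+1) := le_of_lt (htmono (Nat.lt_succ_self j))
    rcases Nat.even_or_odd j with hj | hj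
    · have h1 : R (t j) < 0 := htRneg j hj
      have h2 : 0 < R (t (j+1)) := htRpos (j+1) (Even.add_one hj)
      obtain ⟨z, hz1, hz2⟩ := intermediate_value_Ioo hlt hRcont.continuousOn ⟨h1, h2⟩
      exact ⟨z, hz1, hz2⟩
    · have h1 : 0 < R (t j) := htRpos j hj
      have h2 : R (t (j+1)) < 0 := htRneg (j+1) (Odd.add_one hj)
      obtain ⟨z, hz1, hz2⟩ := intermediate_value_Ioo' hlt hRcont.continuousOn ⟨h2, h1⟩
      exact ⟨z, hz1, hz2⟩
  choose ζ hζmem hζ0 using hz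
  have hθ0mem : θ0 ∈ Set.Ioo (t 0) (t 1) := by
    rw [ht]; constructor
    · dsimp only; rw [div_lt_iff₀ hn0]
      push_cast
      nlinarith [hβ'1]
    · dsimp only; rw [lt_div_iff₀ hn0]
      push_cast
      nlinarith [hβ'2]
  obtain ⟨s1, hs1mem, hs1pos⟩ := exists_pos_left hRder hRder0 hRθ0 hθ0mem.1
  obtain ⟨s2, hs2mem, hs2neg⟩ := exists_neg_right hRder hRder0 hRθ0 hθ0mem.2
  -- zero in (t 0, s1)
  have hz0 : ∃ z, z ∈ Set.Ioo (t 0) s1 ∧ R z = 0 := by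
    have h1 : R (t 0) < 0 := htRneg 0 ⟨0, rfl⟩
    obtain ⟨z, hz1, hz2⟩ := intermediate_value_Ioo (le_of_lt hs1mem.1) hRcont.continuousOn
      ⟨h1, hs1pos⟩
    exact ⟨z, hz1, hz2⟩
  obtain ⟨z0, hz0mem, hz0root⟩ := hz0
  have hz2' : ∃ z, z ∈ Set.Ioo s2 (t 1) ∧ R z = 0 := by
    have h1 : 0 < R (t 1) := htRpos 1 odd_one
    obtain ⟨z, hz1, hz2⟩ := intermediate_value_Ioo (le_of_lt hs2mem.2) hRcont.continuousOn
      ⟨hs2neg, h1⟩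
    exact ⟨z, hz1, hz2⟩
  obtain ⟨z2, hz2mem, hz2root⟩ := hz2'
  -- the list of 2n+2 distinct zeros
  set w : ℕ → ℝ := fun j => if j = 0 then z0 else if j = 1 then θ0 else if j = 2 then z2
    else ζ (j-2) with hw
  have hw0 : w 0 = z0 := by simp [hw]
  have hw1 : w 1 = θ0 := by simp [hw]
  have hw2 : w 2 = z2 := by simp [hw]
  have hw3 : ∀ k:ℕ, w (k+3) = ζ (k+1) := by
    intro k
    rw [hw]; dsimp only
    rw [if_neg (by omega), if_neg (by omega), if_neg (by omega)]
    congr 1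
  have hwroot : ∀ j:ℕ, R (w j) = 0 := by
    intro j
    match j with
    | 0 => rw [hw0]; exact hz0root
    | 1 => rw [hw1]; exact hRθ0
    | 2 => rw [hw2]; exact hz2root
    | (k+3) => rw [hw3]; exact hζ0 (k+1)
  have hwmono : StrictMono w := by
    apply strictMono_nat_of_lt_succ
    intro j
    match j with
    | 0 =>
      rw [hw0, hw1]
      exact lt_trans hz0mem.2 hs1mem.2
    | 1 =>
      rw [hw1, hw2]
      exact lt_trans hs2mem.1 hz2mem.1
    | 2 =>
      rw [hw2, hw3 0]
      exact lt_trans hz2mem.2 (hζmem 1).1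
    | (k+3) =>
      rw [hw3 k, hw3 (k+1)]
      exact lt_trans (hζmem (k+1)).2 (hζmem (k+2)).1
  have hwmem : ∀ j:ℕ, j < 2*n+2 → w j ∈ Set.Ioo (t 0) (t (2*n)) := by
    intro j hj
    have h12n : t 1 ≤ t (2*n) := htmono.monotone (by omega)
    match j with
    | 0 =>
      rw [hw0]
      exact ⟨hz0mem.1, lt_of_lt_of_le (lt_trans (lt_trans hz0mem.2 hs1mem.2) hθ0mem.2) h12n⟩
    | 1 =>
      rw [hw1]
      exact ⟨hθ0mem.1, lt_of_lt_of_le hθ0mem.2 h12n⟩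
    | 2 =>
      rw [hw2]
      exact ⟨lt_trans hθ0mem.1 (lt_trans hs2mem.1 hz2mem.1), lt_of_lt_of_le hz2mem.2 h12n⟩
    | (k+3) =>
      rw [hw3 k]
      constructor
      · exact lt_trans (htmono (by omega : 0 < k+1)) (hζmem (k+1)).1
      · exact lt_of_lt_of_le (hζmem (k+1)).2 (htmono.monotone (by omega : k+2 ≤ 2*n))
  have hper : t (2*n) = t 0 + 2*π := by
    rw [ht]; dsimp only; field_simp; push_cast; ring
  set F : Polynomial ℂ := Polynomial.C ((c:ℂ) * Complex.exp (-(β:ℂ)*Complex.I) / (2*Complex.I)) * Polynomial.X^(2*n)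
      - Polynomial.C ((c:ℂ) * Complex.exp ((β:ℂ)*Complex.I) / (2*Complex.I))
      - ∑ k ∈ Finset.range (n+1), Polynomial.C ((q.coeff k : ℂ)/2^k) * (Polynomial.X^2+1)^k * Polynomial.X^(n-k) with hF
  have hFeval : ∀ θ:ℝ, F.eval (Complex.exp ((θ:ℂ)*Complex.I)) = Complex.exp ((n:ℂ)*θ*Complex.I) * ((R θ : ℝ) : ℂ) := by
    intro θ
    rw [hF, hR]
    exact bernstein_Feval q n hn c β θ
  have hFdeg : F.natDegree ≤ 2*n := by
    rw [hF]
    refine le_trans (Polynomial.natDegree_sub_le _ _) ?_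
    rw [max_le_iff]
    constructor
    · refine le_trans (Polynomial.natDegree_sub_le _ _) ?_
      rw [max_le_iff]
      refine ⟨le_trans (Polynomial.natDegree_C_mul_le _ _) (by simp), by simp⟩
    · refine Polynomial.natDegree_sum_le_of_forall_le _ _ ?_
      intro k hk
      have hk' : k ≤ n := Nat.lt_succ_iff.mp (Finset.mem_range.mp hk)
      have hXk : (Polynomial.X^(n-k) : Polynomial ℂ).natDegree = n - k := Polynomial.natDegree_X_pow _
      have hC : (Polynomial.C ((q.coeff k : ℂ)/2^k)).natDegree = 0 := Polynomial.natDegree_C _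
      have hpow : ((Polynomial.X^2+1 : Polynomial ℂ)^k).natDegree ≤ 2*k := by
        refine le_trans (Polynomial.natDegree_pow_le) ?_
        have h2 : (Polynomial.X^2+1 : Polynomial ℂ).natDegree ≤ 2 := by
          refine le_trans (Polynomial.natDegree_add_le _ _) ?_
          simp
        calc k * (Polynomial.X^2+1 : Polynomial ℂ).natDegree ≤ k * 2 := Nat.mul_le_mul_left k h2
          _ = 2*k := by ring
      refine le_trans Polynomial.natDegree_mul_le ?_
      refine le_trans (Nat.add_le_add (le_trans Polynomial.natDegree_mul_le
        (Nat.add_le_add hC.le hpow)) hXk.le) ?_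
      omega
  have hF0 : F ≠ 0 := by
    intro h
    have h1 := hFeval (t 1)
    rw [h, Polynomial.eval_zero] at h1
    have h2 : ((R (t 1) : ℝ) : ℂ) = 0 :=
      ((mul_eq_zero.mp h1.symm).resolve_left (Complex.exp_ne_zero _))
    have h3 : R (t 1) = 0 := by exact_mod_cast h2
    exact absurd h3 (ne_of_gt (htRpos 1 odd_one))
  have hroots : ∀ j:ℕ, j < 2*n+2 → Complex.exp ((w j : ℂ) * Complex.I) ∈ F.roots := by
    intro j hj
    rw [Polynomial.mem_roots']
    refine ⟨hF0, ?_⟩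
    rw [Polynomial.IsRoot, hFeval (w j), hwroot j]
    simp
  have hinj : Set.InjOn (fun j => Complex.exp ((w j : ℂ) * Complex.I))
      ((Finset.range (2*n+2)) : Set ℕ) := by
    intro i hi j hj hij
    simp only [Finset.coe_range, Set.mem_Iio] at hi hj
    have h1 := hwmem i hi
    have h2 := hwmem j hj
    rw [hper] at h1 h2
    obtain ⟨k, hk⟩ := Complex.exp_eq_exp_iff_exists_int.mp hij
    have hkI : ((w i : ℂ) - (w j) - (k:ℂ)*(2*(π:ℝ))) * Complex.I = 0 := by
      linear_combination hk
    have hk' : ((w i : ℂ) - (w j) - (k:ℂ)*(2*(π:ℝ))) = 0 :=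
      (mul_eq_zero.mp hkI).resolve_right Complex.I_ne_zero
    have hreal : w i - w j - (k:ℝ)*(2*π) = 0 := by exact_mod_cast hk'
    have hπ := Real.pi_pos
    have hk0 : k = 0 := by
      by_contra hkne
      rcases lt_or_gt_of_ne hkne with hk1 | hk1
      · have hkR : (k:ℝ) ≤ -1 := by exact_mod_cast (by omega : k ≤ -1)
        nlinarith [h1.1, h1.2, h2.1, h2.2]
      · have hkR : (1:ℝ) ≤ k := by exact_mod_cast (by omega : 1 ≤ k)
        nlinarith [h1.1, h1.2, h2.1, h2.2]
    rw [hk0] at hreal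
    push_cast at hreal
    exact hwmono.injective (by linarith : w i = w j)
  set Z := (Finset.range (2*n+2)).image (fun j => Complex.exp ((w j : ℂ) * Complex.I)) with hZ
  have hcard : Z.card = 2*n+2 := by
    rw [hZ, Finset.card_image_of_injOn hinj, Finset.card_range]
  have hsub : Z ⊆ F.roots.toFinset := by
    intro x hx
    rw [hZ, Finset.mem_image] at hx
    obtain ⟨j, hj, rfl⟩ := hx
    rw [Multiset.mem_toFinset]
    exact hroots j (Finset.mem_range.mp hj)
  have hfinal : 2*n+2 ≤ 2*n := by
    calc 2*n+2 = Z.card := hcard.symm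
      _ ≤ F.roots.toFinset.card := Finset.card_le_card hsub
      _ ≤ Multiset.card F.roots := F.roots.toFinset_card_le
      _ ≤ F.natDegree := F.card_roots'
      _ ≤ 2*n := hFdeg
  omega


/-- Bernstein's inequality: a real polynomial of degree `d` bounded by 1 in sup-norm
on `[-1, 1]` satisfies `|q'(x)| ≤ d / √(1 - x²)` on `(-1, 1)`. -/
theorem bernstein_inequality (q : Polynomial ℝ) (d : ℕ) (hd : q.natDegree = d)
    (hq : ∀ x ∈ Set.Icc (-1 : ℝ) 1, |q.eval x| ≤ 1) :
    ∀ x ∈ Set.Ioo (-1 : ℝ) 1,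
      |(Polynomial.derivative q).eval x| ≤ (d : ℝ) / Real.sqrt (1 - x ^ 2) := by
  intro x hx
  obtain ⟨hx1, hx2⟩ := hx
  rcases Nat.eq_zero_or_pos d with hd0 | hd1
  · subst hd0
    obtain ⟨a, rfl⟩ := Polynomial.natDegree_eq_zero.mp hd
    simp
  · have hs : (0:ℝ) < Real.sqrt (1 - x^2) := by
      apply Real.sqrt_pos.mpr
      nlinarith
    rw [le_div_iff₀ hs]
    have hcos := Real.cos_arccos (x := x) (by linarith) (by linarith)
    have hsin := Real.sin_arccos (x := x)
    set θ0 := Real.arccos x with hθ0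
    have h1 := bernstein_key q d (le_of_eq hd) hd1 hq θ0
    have h2 := bernstein_key (-q) d (by simpa using hd.le) hd1 (fun y hy => by
      simpa using hq y hy) θ0
    rw [Polynomial.derivative_neg, Polynomial.eval_neg] at h2
    rw [hcos] at h1 h2
    have h1' : -(Real.sqrt (1-x^2)) * Polynomial.eval x (Polynomial.derivative q) ≤ d := by
      rw [← hsin]; exact h1
    have h2' : Real.sqrt (1-x^2) * Polynomial.eval x (Polynomial.derivative q) ≤ d := by
      rw [← hsin]; nlinarith [h2]
    rcases abs_cases (Polynomial.eval x (Polynomial.derivative q)) with ⟨he, _⟩ | ⟨he, _⟩ <;>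
      rw [he] <;> nlinarith [Real.sqrt_nonneg (1-x^2)]
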